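/- On the Hilbert space L²(ℝ^{2m} × ℝ), the formula (U(g(u,c,a,b))f)(x,λ) = exp(i·e^{2λ}·u·(e^{−λ} b·x + c)) · f(x + e^λ a, λ + ln u) defines a unitary representation of the semidirect product group ℝ_+ ⋉ H_{2m} (with matrix form g(u,c,a,b) = [[u,a,c],[0,𝟙,b],[0,0,u^{-1}]]): each U(g) is unitary and U(g)U(g') = U(gg'). -/

import Mathlib

open Complex MeasureTheory

noncomputable section

/-- Euclidean dot product. -/
def dotp {d : ℕ} (a x : Fin d → ℝ) : ℝ := ∑ i, a i * x i

/-- The induced representation of `ℝ₊ ⋉ H_{2m}` on functions on `ℝ^{2m} × ℝ`: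
`(U(g(u,c,a,b))f)(x,λ) = exp(i e^{2λ} u (e^{−λ} b·x + c)) f(x + e^λ a, λ + ln u)`. -/
def Urep (d : ℕ) (u c : ℝ) (a b : Fin d → ℝ) (f : (Fin d → ℝ) × ℝ → ℂ) :
    (Fin d → ℝ) × ℝ → ℂ :=
  fun p => Complex.exp (I * ((Real.exp (2 * p.2) * u * (Real.exp (-p.2) * dotp b p.1 + c) : ℝ) : ℂ)) *
    f (p.1 + Real.exp p.2 • a, p.2 + Real.log u)

lemma dotp_add_right {d : ℕ} (b x y : Fin d → ℝ) : dotp b (x + y) = dotp b x + dotp b y := by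
  simp [dotp, mul_add, Finset.sum_add_distrib]

lemma dotp_add_left {d : ℕ} (b x y : Fin d → ℝ) : dotp (x + y) b = dotp x b + dotp y b := by
  simp [dotp, add_mul, Finset.sum_add_distrib]

lemma dotp_smul_right {d : ℕ} (b : Fin d → ℝ) (t : ℝ) (x : Fin d → ℝ) :
    dotp b (t • x) = t * dotp b x := by
  simp only [dotp, Finset.mul_sum, Pi.smul_apply, smul_eq_mul]
  exact Finset.sum_congr rfl fun i _ => by ring

lemma dotp_smul_left {d : ℕ} (b : Fin d → ℝ) (t : ℝ) (x : Fin d → ℝ) :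
    dotp (t • x) b = t * dotp x b := by
  simp only [dotp, Finset.mul_sum, Pi.smul_apply, smul_eq_mul]
  exact Finset.sum_congr rfl fun i _ => by ring

lemma dotp_comm {d : ℕ} (a b : Fin d → ℝ) : dotp a b = dotp b a := by
  simp [dotp, mul_comm]

/-- The translation-shear homeomorphism `(x, λ) ↦ (x + e^λ a, λ + log u)`. -/
def Tharm (d : ℕ) (a : Fin d → ℝ) (u : ℝ) : ((Fin d → ℝ) × ℝ) ≃ₜ ((Fin d → ℝ) × ℝ) where
  toFun p := (p.1 + Real.exp p.2 • a, p.2 + Real.log u)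
  invFun p := (p.1 - Real.exp (p.2 - Real.log u) • a, p.2 - Real.log u)
  left_inv p := by simp
  right_inv p := by simp
  continuous_toFun := by fun_prop
  continuous_invFun := by fun_prop

lemma Tharm_measurePreserving (d : ℕ) (a : Fin d → ℝ) (u : ℝ) :
    MeasurePreserving (Tharm d a u) volume volume := by
  have hT' : MeasurePreserving
      (fun q : ℝ × (Fin d → ℝ) => (q.1 + Real.log u, q.2 + Real.exp q.1 • a))
      volume volume := by
    have hgm : Measurable (Function.uncurry fun (l : ℝ) (x : Fin d → ℝ) =>
        x + Real.exp l • a) := by fun_prop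
    exact (measurePreserving_add_right volume (Real.log u)).skew_product hgm
      (Filter.Eventually.of_forall fun l =>
        (measurePreserving_add_right volume (Real.exp l • a)).map_eq)
  have hs : MeasurePreserving (Prod.swap : ((Fin d → ℝ) × ℝ) → (ℝ × (Fin d → ℝ)))
      volume volume := Measure.measurePreserving_swap
  have hs' : MeasurePreserving (Prod.swap : (ℝ × (Fin d → ℝ)) → ((Fin d → ℝ) × ℝ))
      volume volume := Measure.measurePreserving_swap
  have := (hs'.comp hT').comp hs
  convert this using 1
  rfl

/-- `U` is a unitary representation of the semidirect product `ℝ₊ ⋉ H_{2m}` on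
`L²(ℝ^{2m} × ℝ)`: each `U(g)` preserves the `L²` norm, and `U(g)U(g') = U(gg')` with the
group law `gg' = g(uu', uc' + a·b' + c/u', ua' + a, b' + b/u')`. -/
theorem stmt18 (m : ℕ) (hm : 1 ≤ m) :
    (∀ (u c : ℝ) (a b : Fin (2 * m) → ℝ) (f : (Fin (2 * m) → ℝ) × ℝ → ℂ), 0 < u →
      (∫ p : (Fin (2 * m) → ℝ) × ℝ, ‖Urep (2 * m) u c a b f p‖ ^ 2)
        = ∫ p : (Fin (2 * m) → ℝ) × ℝ, ‖f p‖ ^ 2) ∧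
    (∀ (u u' c c' : ℝ) (a b a' b' : Fin (2 * m) → ℝ) (f : (Fin (2 * m) → ℝ) × ℝ → ℂ),
      0 < u → 0 < u' →
      Urep (2 * m) u c a b (Urep (2 * m) u' c' a' b' f)
        = Urep (2 * m) (u * u') (u * c' + dotp a b' + c / u') (u • a' + a)
            (b' + u'⁻¹ • b) f) := by
  constructor
  · intro u c a b f hu
    have hT := Tharm_measurePreserving (2 * m) a u
    have hemb : MeasurableEmbedding (Tharm (2 * m) a u) :=
      (Tharm (2 * m) a u).toMeasurableEquiv.measurableEmbedding
    calc (∫ p : (Fin (2 * m) → ℝ) × ℝ, ‖Urep (2 * m) u c a b f p‖ ^ 2)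
        = ∫ p : (Fin (2 * m) → ℝ) × ℝ, ‖f (Tharm (2 * m) a u p)‖ ^ 2 := by
          congr 1
          funext p
          have h1 : ‖Complex.exp (I * ((Real.exp (2 * p.2) * u *
              (Real.exp (-p.2) * dotp b p.1 + c) : ℝ) : ℂ))‖ = 1 := by
            rw [mul_comm, Complex.norm_exp_ofReal_mul_I]
          show ‖_ * f _‖ ^ 2 = _
          rw [norm_mul, h1, one_mul]
          rfl
      _ = ∫ p : (Fin (2 * m) → ℝ) × ℝ, ‖f p‖ ^ 2 :=
          hT.integral_comp hemb (fun p => ‖f p‖ ^ 2)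
  · intro u u' c c' a b a' b' f hu hu'
    funext p
    obtain ⟨x, l⟩ := p
    have hE : Real.exp (-l) * Real.exp l = 1 := by
      rw [← Real.exp_add]; simp
    have h1 : Real.exp (l + Real.log u) = Real.exp l * u := by
      rw [Real.exp_add, Real.exp_log hu]
    have e2 : Real.exp (2 * (l + Real.log u)) = Real.exp (2 * l) * u ^ 2 := by
      rw [show 2 * (l + Real.log u) = 2 * l + (Real.log u + Real.log u) by ring,
        Real.exp_add, Real.exp_add, Real.exp_log hu]; ring
    have en : Real.exp (-(l + Real.log u)) = Real.exp (-l) * u⁻¹ := by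
      simp [neg_add, Real.exp_add, Real.exp_neg, Real.exp_log hu, mul_comm]
    have harg1 : x + Real.exp l • a + Real.exp (l + Real.log u) • a'
        = x + Real.exp l • (u • a' + a) := by
      rw [h1]
      funext i
      simp [mul_comm, mul_left_comm]
      ring
    have harg2 : l + Real.log u + Real.log u' = l + Real.log (u * u') := by
      rw [Real.log_mul hu.ne' hu'.ne']; ring
    have hphase : Real.exp (2 * l) * u * (Real.exp (-l) * dotp b x + c)
        + Real.exp (2 * (l + Real.log u)) * u' *
            (Real.exp (-(l + Real.log u)) * dotp b' (x + Real.exp l • a) + c')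
        = Real.exp (2 * l) * (u * u') *
            (Real.exp (-l) * dotp (b' + u'⁻¹ • b) x
              + (u * c' + dotp a b' + c / u')) := by
      rw [e2, en, dotp_add_right, dotp_smul_right, dotp_add_left, dotp_smul_left,
        dotp_comm a b']
      have h2 : Real.exp (2 * l) = Real.exp l * Real.exp l := by
        rw [two_mul, Real.exp_add]
      have hn : Real.exp (-l) = (Real.exp l)⁻¹ := Real.exp_neg l
      rw [h2, hn]
      field_simp
      ring
    simp only [Urep]
    rw [← mul_assoc, ← Complex.exp_add, harg1, harg2]
    congr 2
    push_cast
    rw [← mul_add]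
    congr 1
    have h := congrArg (fun r : ℝ => (r : ℂ)) hphase
    push_cast at h ⊢
    linear_combination h

end
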